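/- If the generalized composition α̃ reaches level e, then G_α̃ lies in the ideal J^(e) of ℚ[[x₁,x₂,...]] generated by the fundamental quasi-symmetric functions F_α for standard compositions α admitting a factorization α = πρ with d(π) - ℓ(π) ≥ e. -/

import Mathlib

/-- Descent set of a composition (list of positive parts): partial sums. -/
def descents (l : List ℕ) : Finset ℕ :=
  (Finset.Ioo 0 l.length).image (fun k => (l.take k).sum)

/-- The fundamental quasi-symmetric function of degree `d` with descent set `D`
(variable `xᵢ` is `X (i-1)`). -/
noncomputable def Fqs (d : ℕ) (D : Finset ℕ) : MvPowerSeries ℕ ℚ :=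
  fun e => (Nat.card {j : Fin d → ℕ // Monotone j ∧
    (∀ a b : Fin d, (a : ℕ) + 1 = (b : ℕ) → (a : ℕ) + 1 ∈ D → j a < j b) ∧
    ∀ s : ℕ, e s = (Finset.univ.filter fun i => j i = s).card} : ℚ)

/-- Strip the trailing zeros of a generalized composition (finite list of parts). -/
def strip (l : List ℕ) : List ℕ := (l.reverse.dropWhile (· == 0)).reverse

/-- Fuel-driven version of the recursive definition of `G`.  After stripping trailing
zeros: if the result `ν` is a standard composition, `G = F_ν`; otherwise write
`ν = γ ++ [0] ++ τ` where `τ = a :: β` is the maximal zero-free (standard) suffix, and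
`G_{γ·0·a·β} = G_{γ·a·β} - x_{ℓ(γ)+1} · G_{γ·(a-1)·β}` (note `x_{k}` is `X (k-1)`).
The fuel (an upper bound for the stripped length, which strictly decreases) makes the
recursion structural. -/
noncomputable def Gaux : ℕ → List ℕ → MvPowerSeries ℕ ℚ
  | 0, l => Fqs (strip l).sum (descents (strip l))
  | (fuel + 1), l =>
      let l' := strip l
      if 0 ∈ l' then
        let r := l'.reverse
        let τ := (r.takeWhile (· != 0)).reverse
        let γ := ((r.dropWhile (· != 0)).tail).reverse
        Gaux fuel (γ ++ τ) -
          MvPowerSeries.X γ.length * Gaux fuel (γ ++ (τ.headI - 1) :: τ.tail)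
      else Fqs l'.sum (descents l')

/-- The function `G_{α̃}` of a generalized composition `α̃` (finite list of parts,
extended by zeros), defined recursively from fundamental quasi-symmetric functions:
`G_{0,0,…} = 1`; `G_{ν·0·0⋯} = F_ν` for `ν` standard; and
`G_{γ̃·0·a·β·0⋯} = G_{γ̃·a·β·0⋯} - x_{ℓ(γ̃)+1}·G_{γ̃·(a-1)·β·0⋯}` for `a > 0`, `β`
standard. -/
noncomputable def G (l : List ℕ) : MvPowerSeries ℕ ℚ := Gaux (strip l).length l

/-- A generalized composition (list of parts, extended by zeros) reaches level `e` if
some prefix of length `k ≥ 1` has sum at least `k + e`. -/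
def listReaches (l : List ℕ) (e : ℕ) : Prop :=
  ∃ k : ℕ, 0 < k ∧ k + e ≤ (l.take k).sum

/-- The ideal `J^(e)` of `ℚ[[x₁,x₂,…]]` generated by the fundamental quasi-symmetric
functions `F_α` for standard compositions `α` admitting a factorization `α = πρ` with
`d(π) - ℓ(π) ≥ e` (for a nonempty prefix `π`). -/
noncomputable def Jideal (e : ℕ) : Ideal (MvPowerSeries ℕ ℚ) :=
  Ideal.span {P | ∃ l : List ℕ, (∀ x ∈ l, 0 < x) ∧ listReaches l e ∧
    P = Fqs l.sum (descents l)}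

/-! ### Auxiliary lemmas -/

lemma strip_spec (l : List ℕ) : ∃ z : List ℕ, l = strip l ++ z ∧ ∀ x ∈ z, x = 0 := by
  refine ⟨(l.reverse.takeWhile (· == 0)).reverse, ?_, ?_⟩
  · have h := List.takeWhile_append_dropWhile (p := (· == 0)) (l := l.reverse)
    conv_lhs => rw [← List.reverse_reverse l, ← h, List.reverse_append]
    rfl
  · intro x hx
    rw [List.mem_reverse] at hx
    simpa using List.mem_takeWhile_imp hx

lemma take_sum_strip (l : List ℕ) (k : ℕ) : (l.take k).sum = ((strip l).take k).sum := by
  obtain ⟨z, hl, hz⟩ := strip_spec l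
  conv_lhs => rw [hl]
  rw [List.take_append, List.sum_append]
  have : (z.take (k - (strip l).length)).sum = 0 :=
    List.sum_eq_zero fun x hx => hz x (List.take_subset _ _ hx)
  rw [this, add_zero]

lemma reaches_strip (l : List ℕ) (e : ℕ) :
    listReaches l e ↔ listReaches (strip l) e := by
  constructor <;> rintro ⟨k, hk, h⟩ <;> refine ⟨k, hk, ?_⟩
  · rw [← take_sum_strip]; exact h
  · rw [take_sum_strip]; exact h

lemma strip_length_le (l : List ℕ) : (strip l).length ≤ l.length := by
  have := List.Sublist.length_le (List.dropWhile_sublist (p := (· == 0)) (l := l.reverse))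
  simpa [strip] using this

lemma reachA (e : ℕ) (γ τ : List ℕ) (h : listReaches (γ ++ 0 :: τ) e) :
    listReaches (γ ++ τ) e := by
  obtain ⟨k, hk, hs⟩ := h
  rw [List.take_append, List.sum_append] at hs
  by_cases hkm : k ≤ γ.length
  · refine ⟨k, hk, ?_⟩
    rw [List.take_append, List.sum_append]
    have h0 : k - γ.length = 0 := by omega
    rw [h0] at hs ⊢
    simpa using hs
  · push_neg at hkm
    have h3 : (0 :: τ).take (k - γ.length) = 0 :: τ.take (k - γ.length - 1) := by
      rw [show k - γ.length = (k - γ.length - 1) + 1 from by omega]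
      rfl
    rw [h3, List.sum_cons] at hs
    have hγ : γ.take k = γ := List.take_of_length_le (by omega)
    rw [hγ] at hs
    have hk1 : 0 < k - 1 := by
      rcases Nat.eq_or_lt_of_le hk with h1 | h1
      · exfalso
        have hγ' : γ = [] := List.length_eq_zero_iff.mp (by omega)
        have h0 : k - γ.length - 1 = 0 := by omega
        rw [h0] at hs
        simp [hγ'] at hs
        omega
      · omega
    refine ⟨k - 1, hk1, ?_⟩
    rw [List.take_append, List.sum_append,
      List.take_of_length_le (show γ.length ≤ k - 1 by omega)]
    have : k - 1 - γ.length = k - γ.length - 1 := by omega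
    rw [this]
    omega

lemma reachB (e : ℕ) (γ : List ℕ) (a : ℕ) (β : List ℕ)
    (h : listReaches (γ ++ 0 :: a :: β) e) :
    listReaches (γ ++ (a - 1) :: β) e := by
  obtain ⟨k, hk, hs⟩ := h
  rw [List.take_append, List.sum_append] at hs
  by_cases hkm : k ≤ γ.length
  · refine ⟨k, hk, ?_⟩
    rw [List.take_append, List.sum_append]
    have h0 : k - γ.length = 0 := by omega
    rw [h0] at hs ⊢
    simpa using hs
  · push_neg at hkm
    rw [List.take_of_length_le (show γ.length ≤ k from by omega)] at hs
    by_cases hk1 : k = γ.length + 1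
    · have h0 : k - γ.length = 1 := by omega
      rw [h0] at hs
      simp only [List.take_succ_cons, List.take_zero, List.sum_cons, List.sum_nil] at hs
      have hγ0 : 0 < γ.length := by
        by_contra hc
        have hγ : γ = [] := List.length_eq_zero_iff.mp (by omega)
        simp [hγ] at hs
        omega
      refine ⟨γ.length, hγ0, ?_⟩
      rw [List.take_append, List.sum_append, Nat.sub_self,
        List.take_of_length_le le_rfl]
      simp only [List.take_zero, List.sum_nil, add_zero]
      omega
    · have h2 : (0 :: a :: β).take (k - γ.length) =
          0 :: a :: β.take (k - γ.length - 2) := by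
        rw [show k - γ.length = (k - γ.length - 2) + 2 from by omega]
        rfl
      rw [h2] at hs
      simp only [List.sum_cons] at hs
      refine ⟨k - 1, by omega, ?_⟩
      rw [List.take_append, List.sum_append,
        List.take_of_length_le (show γ.length ≤ k - 1 by omega)]
      have h4 : ((a - 1) :: β).take (k - 1 - γ.length) =
          (a - 1) :: β.take (k - γ.length - 2) := by
        rw [show k - 1 - γ.length = (k - γ.length - 2) + 1 from by omega]
        rfl
      rw [h4, List.sum_cons]
      omega

lemma strip_reverse (l : List ℕ) : (strip l).reverse = l.reverse.dropWhile (· == 0) := by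
  simp [strip]

lemma strip_head_reverse (l : List ℕ) (h : (strip l).reverse ≠ []) :
    (strip l).reverse.head h ≠ 0 := by
  have h2 : l.reverse.dropWhile (· == 0) ≠ [] := by rw [← strip_reverse]; exact h
  have h3 := List.head_dropWhile_not (· == 0) (l := l.reverse) h2
  intro hc
  have h4 : (strip l).reverse.head h = (l.reverse.dropWhile (· == 0)).head h2 := by
    congr 1
    exact strip_reverse l
  rw [← h4, hc] at h3
  simp at h3

/-- Decomposition of a list containing a zero whose reverse starts with a nonzero head. -/
lemma decomp (s : List ℕ) (hne : s.reverse ≠ []) (hhead : s.reverse.head hne ≠ 0)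
    (h0 : 0 ∈ s) :
    s = ((s.reverse.dropWhile (· != 0)).tail).reverse ++
      0 :: (s.reverse.takeWhile (· != 0)).reverse ∧
    (s.reverse.takeWhile (· != 0)).reverse ≠ [] := by
  set r := s.reverse with hr
  set T := r.takeWhile (· != 0) with hT
  set D := r.dropWhile (· != 0) with hD
  have hTD : T ++ D = r := List.takeWhile_append_dropWhile (p := (· != 0)) (l := r)
  have h0r : 0 ∈ r := by rw [hr, List.mem_reverse]; exact h0
  have h0T : (0 : ℕ) ∉ T := fun hc => by simpa using List.mem_takeWhile_imp hc
  have h0D : (0 : ℕ) ∈ D := by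
    rcases (List.mem_append.mp (hTD ▸ h0r)) with h' | h'
    · exact absurd h' h0T
    · exact h'
  have hDne : D ≠ [] := List.ne_nil_of_mem h0D
  have hDhead : D.head hDne = 0 := by
    have := List.head_dropWhile_not (· != 0) (l := r) (by rw [← hD]; exact hDne)
    simpa using this
  have hDeq : D = 0 :: D.tail := by
    conv_lhs => rw [← List.cons_head_tail hDne, hDhead]
  have hTne : T ≠ [] := by
    intro hc
    rw [hc, List.nil_append] at hTD
    have h5 : D.head hDne = r.head hne := by congr 1
    rw [hDhead] at h5
    exact hhead h5.symm
  constructor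
  · conv_lhs => rw [← List.reverse_reverse s, ← hr, ← hTD, hDeq]
    rw [List.reverse_append, List.reverse_cons]
    simp
  · simpa using hTne

lemma Gaux_mem (e : ℕ) : ∀ fuel (l : List ℕ), (strip l).length ≤ fuel →
    listReaches l e → Gaux fuel l ∈ Jideal e := by
  intro fuel
  induction fuel with
  | zero =>
    intro l hlen hr
    exfalso
    have hs : strip l = [] := List.length_eq_zero_iff.mp (Nat.le_zero.mp hlen)
    obtain ⟨k, hk, h⟩ := (reaches_strip l e).mp hr
    rw [hs] at h
    simp at h
    omega
  | succ fuel ih =>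
    intro l hlen hr
    rw [Gaux]
    by_cases hmem : 0 ∈ strip l
    · rw [if_pos hmem]
      -- decomposition
      have hne : (strip l).reverse ≠ [] := by
        intro hc
        rw [← List.reverse_reverse (strip l), hc] at hmem
        simp at hmem
      obtain ⟨hdec, hτne⟩ := decomp (strip l) hne (strip_head_reverse l hne) hmem
      set τ := ((strip l).reverse.takeWhile (· != 0)).reverse with hτ
      set γ := (((strip l).reverse.dropWhile (· != 0)).tail).reverse with hγ
      have hlen2 : γ.length + τ.length + 1 ≤ fuel + 1 := by
        have := congrArg List.length hdec
        simp at this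
        omega
      have hrs : listReaches (strip l) e := (reaches_strip l e).mp hr
      rw [hdec] at hrs
      -- τ = τ.headI :: τ.tail
      obtain ⟨a, β, hτab⟩ := List.exists_cons_of_ne_nil hτne
      have hheadI : τ.headI = a := by rw [hτab]; rfl
      have htail : τ.tail = β := by rw [hτab]; rfl
      refine sub_mem ?_ (Ideal.mul_mem_left _ _ ?_)
      · refine ih (γ ++ τ) ?_ (reachA e γ τ hrs)
        calc (strip (γ ++ τ)).length ≤ (γ ++ τ).length := strip_length_le _
          _ ≤ fuel := by simp; omega
      · rw [hheadI, htail]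
        refine ih (γ ++ (a - 1) :: β) ?_ ?_
        · calc (strip (γ ++ (a - 1) :: β)).length ≤ (γ ++ (a - 1) :: β).length :=
              strip_length_le _
            _ ≤ fuel := by
              have : τ.length = β.length + 1 := by rw [hτab]; rfl
              simp
              omega
        · apply reachB e γ a β
          rw [hτab] at hrs
          exact hrs
    · rw [if_neg hmem]
      apply Ideal.subset_span
      refine ⟨strip l, ?_, (reaches_strip l e).mp hr, rfl⟩
      intro x hx
      exact Nat.pos_of_ne_zero fun hc => hmem (hc ▸ hx)

/-- If the generalized composition `α̃` reaches level `e`, then `G_{α̃} ∈ J^(e)`. -/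
theorem G_mem_Jideal (e : ℕ) (l : List ℕ) (h : listReaches l e) :
    G l ∈ Jideal e :=
  Gaux_mem e _ l le_rfl h
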